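/- Decomposition of the answer set of a query into finitely many neighborhood types (semantic form of the decomposition lemma): Let φ(x₁,…,x_k) be a first-order formula over σ with k free variables, r = 2^{|φ|}, and let 𝒜 be a finite σ-structure. Then there exists a finite list S of finite σ-structures expanded with k constants such that for every k-tuple ā of elements of 𝒜: 𝒜 ⊨ φ(ā) if and only if 𝒩_r(ā) is isomorphic to some member of S. In particular, the answer set φ(𝒜) = {ā : 𝒜 ⊨ φ(ā)} is a union of classes of the equivalence relation 'ā ∼ b̄ iff 𝒩_r(ā) ≃ 𝒩_r(b̄)'. -/

import Mathlib

open FirstOrder FirstOrder.Language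

/-- The Gaifman graph of a structure `M` over a relational language `L`: two distinct
elements are adjacent iff they occur together in some tuple of some relation. -/
def gaifmanGraph (L : Language) (M : Type*) [L.Structure M] : SimpleGraph M where
  Adj a b := a ≠ b ∧ ∃ (n : ℕ) (R : L.Relations n) (t : Fin n → M),
      Structure.RelMap R t ∧ (∃ i, t i = a) ∧ (∃ j, t j = b)
  symm := by
    constructor
    rintro a b ⟨hab, n, R, t, ht, hi, hj⟩
    exact ⟨hab.symm, n, R, t, ht, hj, hi⟩
  loopless := by constructor; rintro a ⟨h, -⟩; exact h rfl

/-- Gaifman distance between two elements (`⊤` if not connected). -/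
noncomputable def gdist (L : Language) {M : Type*} [L.Structure M] (a b : M) : ℕ∞ :=
  (gaifmanGraph L M).edist a b

/-- Gaifman distance between two tuples: the minimum of the pairwise distances. -/
noncomputable def tdist (L : Language) {M : Type*} [L.Structure M] {ι κ : Type*}
    (a : ι → M) (b : κ → M) : ℕ∞ :=
  ⨅ (i : ι) (j : κ), gdist L (a i) (b j)

/-- `N_r(ā)`: the set of elements at Gaifman distance at most `r` from the tuple `a`. -/
def ball (L : Language) {M : Type*} [L.Structure M] (r : ℕ) {ι : Type*} (a : ι → M) :
    Set M :=
  { b | ∃ i, gdist L (a i) b ≤ r }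

lemma mem_ball_self (L : Language) {M : Type*} [L.Structure M] (r : ℕ) {ι : Type*}
    (a : ι → M) (i : ι) : a i ∈ ball L r a :=
  ⟨i, by simp [gdist, SimpleGraph.edist_self]⟩

/-- The induced structure on a subset of a structure over a relational language. -/
instance inducedStructure (L : Language) [L.IsRelational] {M : Type*} [L.Structure M]
    (s : Set M) : L.Structure s where
  funMap f _ := isEmptyElim f
  RelMap R t := Structure.RelMap R (fun i => (t i : M))

/-- `𝒩_r(ā) ≃ 𝒩_r(b̄)` : the substructures induced on the `r`-neighborhoods of the
tuples `a` and `b`, expanded with one constant per coordinate, are isomorphic,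
i.e. there is an `L`-isomorphism of the induced structures mapping `a i` to `b i`
for each `i`. -/
def NbhdIso (L : Language) [L.IsRelational] {M : Type*} [L.Structure M] (r : ℕ)
    {ι : Type*} (a b : ι → M) : Prop :=
  ∃ g : (ball L r a) ≃[L] (ball L r b),
    ∀ i, (g ⟨a i, mem_ball_self L r a i⟩ : M) = b i

/-- The size (number of symbols) of a first-order formula. -/
def fsize {L : Language} {α : Type*} : ∀ {n : ℕ}, L.BoundedFormula α n → ℕ
  | _, BoundedFormula.falsum => 1
  | _, BoundedFormula.equal _ _ => 3
  | _, @BoundedFormula.rel _ _ _ m _ _ => m + 1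
  | _, BoundedFormula.imp f g => fsize f + fsize g + 1
  | _, BoundedFormula.all f => fsize f + 1

/-- `G` has all degrees at most `d`. -/
def DegLE {V : Type*} (G : SimpleGraph V) (d : ℕ) : Prop :=
  ∀ v : V, (G.neighborSet v).encard ≤ d

/-- A finite `L`-structure expanded with `k` distinguished constants. -/
structure PointedStr (L : Language) (k : ℕ) where
  carrier : Type
  [str : L.Structure carrier]
  finite : Finite carrier
  pts : Fin k → carrier

attribute [instance] PointedStr.str

/-! ### Auxiliary development : Gaifman graph basics -/

section GaifmanBasics

variable {L : Language} [L.IsRelational] {M : Type*} [L.Structure M]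

lemma gdist_self' (a : M) : gdist L a a = 0 := SimpleGraph.edist_self

lemma gdist_comm' (a b : M) : gdist L a b = gdist L b a := SimpleGraph.edist_comm

lemma gdist_triangle' (a b c : M) : gdist L a c ≤ gdist L a b + gdist L b c :=
  SimpleGraph.edist_triangle

lemma gdist_le_one_of_adj {a b : M} (h : (gaifmanGraph L M).Adj a b) :
    gdist L a b ≤ 1 := by
  rw [gdist, SimpleGraph.edist_eq_one_iff_adj.mpr h]

lemma gdist_le_one_of_rel {n : ℕ} {R : L.Relations n} {t : Fin n → M}
    (ht : Structure.RelMap R t) (i j : Fin n) : gdist L (t i) (t j) ≤ 1 := by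
  rcases eq_or_ne (t i) (t j) with h | h
  · rw [h, gdist_self']; exact zero_le
  · exact gdist_le_one_of_adj ⟨h, n, R, t, ht, ⟨i, rfl⟩, ⟨j, rfl⟩⟩

lemma adj_val_of_induced {s : Set M} {u v : s} (h : (gaifmanGraph L s).Adj u v) :
    (gaifmanGraph L M).Adj u.val v.val := by
  obtain ⟨hne, n, R, t, ht, ⟨i, hi⟩, ⟨j, hj⟩⟩ := h
  exact ⟨fun he => hne (Subtype.ext he), n, R, fun m => (t m : M), ht,
    ⟨i, by simp [hi]⟩, ⟨j, by simp [hj]⟩⟩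

/-- The inclusion of an induced substructure's Gaifman graph into the ambient one. -/
def inducedHom (s : Set M) : gaifmanGraph L s →g gaifmanGraph L M :=
  ⟨Subtype.val, adj_val_of_induced⟩

lemma hom_edist_le {V W : Type*} {G : SimpleGraph V} {H : SimpleGraph W} (f : G →g H)
    (u v : V) : H.edist (f u) (f v) ≤ G.edist u v := by
  rcases eq_or_ne (G.edist u v) ⊤ with h | h
  · simp [h]
  · obtain ⟨p, hp⟩ := SimpleGraph.exists_walk_of_edist_ne_top h
    calc H.edist (f u) (f v) ≤ (p.map f).length := SimpleGraph.edist_le _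
      _ = p.length := by rw [SimpleGraph.Walk.length_map]
      _ = G.edist u v := hp

lemma gdist_le_induced {s : Set M} (u v : s) :
    gdist L u.val v.val ≤ (gaifmanGraph L s).edist u v :=
  hom_edist_le (inducedHom s) u v

lemma adj_induced {s : Set M} {u v : M} (h : (gaifmanGraph L M).Adj u v)
    (hs : ∀ w : M, gdist L u w ≤ 1 → w ∈ s) (hu : u ∈ s) (hv : v ∈ s) :
    (gaifmanGraph L s).Adj ⟨u, hu⟩ ⟨v, hv⟩ := by
  obtain ⟨hne, n, R, t, ht, ⟨i, hi⟩, ⟨j, hj⟩⟩ := h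
  refine ⟨by simpa [Subtype.ext_iff] using hne, n, R,
    fun m => ⟨t m, hs _ (by rw [← hi]; exact gdist_le_one_of_rel ht i m)⟩, ht,
    ⟨i, by exact Subtype.ext hi⟩, ⟨j, by exact Subtype.ext hj⟩⟩

lemma exists_walk_in_ball {ι : Type*} (x : ι → M) (r : ℕ) (i : ι) :
    ∀ {u v : M} (p : (gaifmanGraph L M).Walk u v),
      gdist L (x i) u + p.length ≤ r →
      ∃ (hu : u ∈ ball L r x) (hv : v ∈ ball L r x)
        (q : (gaifmanGraph L (ball L r x)).Walk ⟨u, hu⟩ ⟨v, hv⟩), (q.length : ℕ∞) = p.length := by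
  intro u v p
  induction p with
  | nil =>
    intro h
    exact ⟨⟨i, by simpa using h⟩, ⟨i, by simpa using h⟩, SimpleGraph.Walk.nil, by simp⟩
  | @cons a b c hadj p ih =>
    intro h
    have hlen : (p.length : ℕ∞) + 1 = ((SimpleGraph.Walk.cons hadj p).length : ℕ∞) := by
      push_cast [SimpleGraph.Walk.length_cons]; ring
    have hb : gdist L (x i) b ≤ gdist L (x i) a + 1 := by
      calc gdist L (x i) b ≤ gdist L (x i) a + gdist L a b := gdist_triangle' _ _ _
        _ ≤ gdist L (x i) a + 1 := add_le_add_right (gdist_le_one_of_adj hadj) _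
    have h' : gdist L (x i) b + p.length ≤ r := by
      calc gdist L (x i) b + p.length ≤ (gdist L (x i) a + 1) + p.length :=
            add_le_add_left hb _
        _ = gdist L (x i) a + ((p.length : ℕ∞) + 1) := by ring
        _ ≤ r := by rw [hlen]; exact h
    obtain ⟨hb', hc', q, hq⟩ := ih h'
    have hone : gdist L (x i) a + 1 ≤ r := by
      refine le_trans ?_ h
      rw [← hlen]
      exact add_le_add_right (le_add_self) _
    have ha : a ∈ ball L r x := ⟨i, le_trans (le_add_right le_rfl) hone⟩
    have hs : ∀ w : M, gdist L a w ≤ 1 → w ∈ ball L r x := by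
      intro w hw
      exact ⟨i, le_trans (le_trans (gdist_triangle' _ a _) (add_le_add_right hw _)) hone⟩
    refine ⟨ha, hc', SimpleGraph.Walk.cons (adj_induced hadj hs ha hb') q, ?_⟩
    rw [← hlen, ← hq]
    push_cast [SimpleGraph.Walk.length_cons]
    ring

/-- Upward distance-control: inside a ball with enough margin, induced distances are
no larger than ambient ones. -/
lemma induced_edist_le {ι : Type*} {x : ι → M} {r : ℕ} {u v : M} {i : ι} {D : ℕ∞}
    (hm : gdist L (x i) u + D ≤ r) (huv : gdist L u v ≤ D) :
    ∃ (hu : u ∈ ball L r x) (hv : v ∈ ball L r x),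
      (gaifmanGraph L (ball L r x)).edist ⟨u, hu⟩ ⟨v, hv⟩ ≤ gdist L u v := by
  have hne : gdist L u v ≠ ⊤ := by
    intro htop
    have : D = ⊤ := eq_top_iff.2 (htop ▸ huv)
    rw [this, add_top] at hm
    exact (lt_irrefl _ (lt_of_le_of_lt hm (ENat.coe_lt_top r))).elim
  obtain ⟨p, hp⟩ := SimpleGraph.exists_walk_of_edist_ne_top hne
  have hm' : gdist L (x i) u + p.length ≤ r := by
    rw [show ((p.length : ℕ∞)) = gdist L u v from hp]
    exact le_trans (add_le_add_right huv _) hm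
  obtain ⟨hu, hv, q, hq⟩ := exists_walk_in_ball x r i p hm'
  refine ⟨hu, hv, ?_⟩
  show _ ≤ (gaifmanGraph L M).edist u v
  rw [← hp, ← hq]
  exact SimpleGraph.edist_le _

lemma equiv_adj {s t : Set M} (g : s ≃[L] t) {u v : s}
    (h : (gaifmanGraph L s).Adj u v) : (gaifmanGraph L t).Adj (g u) (g v) := by
  obtain ⟨hne, n, R, tp, ht, ⟨i, hi⟩, ⟨j, hj⟩⟩ := h
  refine ⟨fun he => hne (g.injective he), n, R, g ∘ tp, ?_, ⟨i, by rw [Function.comp_apply, hi]⟩,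
    ⟨j, by rw [Function.comp_apply, hj]⟩⟩
  exact (g.map_rel R tp).mpr ht

/-- An isomorphism of induced structures as a graph homomorphism of Gaifman graphs. -/
def equivHom {s t : Set M} (g : s ≃[L] t) : gaifmanGraph L s →g gaifmanGraph L t :=
  ⟨g, equiv_adj g⟩

lemma equiv_edist {s t : Set M} (g : s ≃[L] t) (u v : s) :
    (gaifmanGraph L t).edist (g u) (g v) = (gaifmanGraph L s).edist u v := by
  refine le_antisymm (hom_edist_le (equivHom g) u v) ?_
  have h2 := hom_edist_le (equivHom g.symm) (g u) (g v)
  have e1 : g.symm (g u) = u := g.symm_apply_apply u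
  have e2 : g.symm (g v) = v := g.symm_apply_apply v
  have h2' : (gaifmanGraph L s).edist (g.symm (g u)) (g.symm (g v)) ≤
      (gaifmanGraph L t).edist (g u) (g v) := h2
  rwa [e1, e2] at h2'

/-- Transfer of distances through an isomorphism of ball-induced structures. -/
lemma gdist_map_le {ι : Type*} {x y : ι → M} {r : ℕ}
    (g : (ball L r x) ≃[L] (ball L r y))
    (hg : ∀ i, (g ⟨x i, mem_ball_self L r x i⟩ : M) = y i)
    {i : ι} {e : M} (hle : gdist L (x i) e ≤ r) :
    ∃ he : e ∈ ball L r x,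
      gdist L (y i) ((g ⟨e, he⟩ : M)) ≤ gdist L (x i) e := by
  obtain ⟨hu, hv, hed⟩ := induced_edist_le (x := x) (r := r) (i := i) (D := (r : ℕ∞))
      (by simp [gdist_self']) hle
  refine ⟨hv, ?_⟩
  calc gdist L (y i) ((g ⟨e, hv⟩ : M))
      = gdist L ((g ⟨x i, mem_ball_self L r x i⟩ : M)) ((g ⟨e, hv⟩ : M)) := by rw [hg i]
    _ ≤ (gaifmanGraph L (ball L r y)).edist (g ⟨x i, mem_ball_self L r x i⟩) (g ⟨e, hv⟩) :=
        gdist_le_induced _ _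
    _ = (gaifmanGraph L (ball L r x)).edist ⟨x i, mem_ball_self L r x i⟩ ⟨e, hv⟩ :=
        equiv_edist g _ _
    _ ≤ gdist L (x i) e := hed

lemma ball_subset_of_margin {ι κ : Type*} {x : ι → M} {r r' : ℕ} {w : κ → M}
    (hw3 : ∀ j, ∃ i, gdist L (x i) (w j) + r' ≤ r) :
    ∀ e ∈ ball L r' w, e ∈ ball L r x := by
  rintro e ⟨j, hj⟩
  obtain ⟨i, hi⟩ := hw3 j
  refine ⟨i, ?_⟩
  calc gdist L (x i) e ≤ gdist L (x i) (w j) + gdist L (w j) e := gdist_triangle' _ _ _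
    _ ≤ gdist L (x i) (w j) + r' := add_le_add_right hj _
    _ ≤ r := hi

lemma restrict_mem {ι κ : Type*} {x y : ι → M} {r r' : ℕ}
    (g : (ball L r x) ≃[L] (ball L r y))
    {w : κ → M} {w' : κ → M}
    (hw1 : ∀ j, w j ∈ ball L r x)
    (hw2 : ∀ j, (g ⟨w j, hw1 j⟩ : M) = w' j)
    (hw3 : ∀ j, ∃ i, gdist L (x i) (w j) + r' ≤ r) :
    ∀ (e : M) (heb : e ∈ ball L r x), e ∈ ball L r' w → ((g ⟨e, heb⟩ : M) ∈ ball L r' w') := by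
  rintro e heb ⟨j, hj⟩
  obtain ⟨i, hi⟩ := hw3 j
  obtain ⟨hu, hv, hed⟩ := induced_edist_le (x := x) (r := r) (i := i) (D := (r' : ℕ∞)) hi hj
  refine ⟨j, ?_⟩
  calc gdist L (w' j) ((g ⟨e, heb⟩ : M))
      = gdist L ((g ⟨w j, hw1 j⟩ : M)) ((g ⟨e, heb⟩ : M)) := by rw [hw2 j]
    _ ≤ (gaifmanGraph L (ball L r y)).edist (g ⟨w j, hw1 j⟩) (g ⟨e, heb⟩) :=
        gdist_le_induced _ _
    _ = (gaifmanGraph L (ball L r x)).edist ⟨w j, hw1 j⟩ ⟨e, heb⟩ := equiv_edist g _ _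
    _ ≤ gdist L (w j) e := hed
    _ ≤ r' := hj

/-- Pointedness of the inverse isomorphism. -/
lemma symm_pointed {ι : Type*} {x y : ι → M} {r : ℕ}
    (g : (ball L r x) ≃[L] (ball L r y))
    {e : M} {he : e ∈ ball L r x} {e' : M} (he' : e' ∈ ball L r y)
    (h : (g ⟨e, he⟩ : M) = e') : (g.symm ⟨e', he'⟩ : M) = e := by
  have h2 : g ⟨e, he⟩ = ⟨e', he'⟩ := Subtype.ext h
  rw [← h2, g.symm_apply_apply]

/-- The key restriction lemma: an isomorphism of `r`-balls restricts to an isomorphism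
of `r'`-balls around any tuple sitting inside the original ball with margin `r'`. -/
lemma restrict_iso {ι κ : Type*} {x y : ι → M} {r r' : ℕ}
    (g : (ball L r x) ≃[L] (ball L r y))
    (hg : ∀ i, (g ⟨x i, mem_ball_self L r x i⟩ : M) = y i)
    {w : κ → M} {w' : κ → M}
    (hw1 : ∀ j, w j ∈ ball L r x)
    (hw2 : ∀ j, (g ⟨w j, hw1 j⟩ : M) = w' j)
    (hw3 : ∀ j, ∃ i, gdist L (x i) (w j) + r' ≤ r) :
    ∃ g' : (ball L r' w) ≃[L] (ball L r' w'),
      ∀ (e : M) (he : e ∈ ball L r' w) (heb : e ∈ ball L r x),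
        (g' ⟨e, he⟩ : M) = (g ⟨e, heb⟩ : M) := by
  have hsub : ∀ e ∈ ball L r' w, e ∈ ball L r x := ball_subset_of_margin hw3
  -- data for the reverse direction
  have hw1' : ∀ j, w' j ∈ ball L r y := fun j => hw2 j ▸ (g ⟨w j, hw1 j⟩).2
  have hw2' : ∀ j, (g.symm ⟨w' j, hw1' j⟩ : M) = w j := fun j => symm_pointed g _ (hw2 j)
  have hg' : ∀ i, (g.symm ⟨y i, mem_ball_self L r y i⟩ : M) = x i :=
    fun i => symm_pointed g _ (hg i)
  have hw3' : ∀ j, ∃ i, gdist L (y i) (w' j) + r' ≤ r := by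
    intro j
    obtain ⟨i, hi⟩ := hw3 j
    have hler : gdist L (x i) (w j) ≤ r := le_trans le_self_add hi
    obtain ⟨he, hmap⟩ := gdist_map_le g hg hler
    refine ⟨i, le_trans (add_le_add_left ?_ _) hi⟩
    calc gdist L (y i) (w' j) = gdist L (y i) ((g ⟨w j, hw1 j⟩ : M)) := by rw [hw2 j]
      _ ≤ gdist L (x i) (w j) := hmap
  have hsub' : ∀ e ∈ ball L r' w', e ∈ ball L r y := ball_subset_of_margin hw3'
  have hfwd := restrict_mem g hw1 hw2 hw3
  have hbwd := restrict_mem g.symm hw1' hw2' hw3'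
  refine ⟨{ toFun := fun e => ⟨(g ⟨e.val, hsub e.val e.2⟩ : M), hfwd e.val _ e.2⟩
            invFun := fun e' => ⟨(g.symm ⟨e'.val, hsub' e'.val e'.2⟩ : M), hbwd e'.val _ e'.2⟩
            left_inv := ?_
            right_inv := ?_
            map_fun' := fun f _ => isEmptyElim f
            map_rel' := ?_ }, fun e he heb => rfl⟩
  · intro e
    apply Subtype.ext
    show (g.symm ⟨(g ⟨e.val, _⟩ : M), _⟩ : M) = e.val
    exact symm_pointed g _ rfl
  · intro e'
    apply Subtype.ext
    show (g ⟨(g.symm ⟨e'.val, _⟩ : M), _⟩ : M) = e'.val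
    have h2 : (⟨(g.symm ⟨e'.val, hsub' e'.val e'.2⟩ : M), _⟩ : ball L r x)
        = g.symm ⟨e'.val, hsub' e'.val e'.2⟩ := Subtype.ext rfl
    rw [h2]
    exact congrArg Subtype.val (g.apply_symm_apply _)
  · intro n R tup
    show Structure.RelMap R (fun m => ((g ⟨(tup m).val, _⟩ : M))) ↔
      Structure.RelMap R (fun m => ((tup m).val))
    exact g.map_rel R (fun m => ⟨(tup m).val, hsub (tup m).val (tup m).2⟩)

/-- Monotonicity of `NbhdIso` in the radius. -/
lemma NbhdIso.mono {ι : Type*} {x y : ι → M} {r r' : ℕ} (hr : r' ≤ r) :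
    NbhdIso L r x y → NbhdIso L r' x y := by
  rintro ⟨g, hg⟩
  obtain ⟨g', hg'⟩ := restrict_iso (r' := r') g hg (w := x) (w' := y)
      (fun i => mem_ball_self L r x i) hg
      (fun i => ⟨i, by rw [gdist_self', zero_add]; exact_mod_cast hr⟩)
  exact ⟨g', fun i => by rw [hg' (x i) _ (mem_ball_self L r x i)]; exact hg i⟩

lemma NbhdIso.symm' {ι : Type*} {x y : ι → M} {r : ℕ} :
    NbhdIso L r x y → NbhdIso L r y x := by
  rintro ⟨g, hg⟩
  exact ⟨g.symm, fun i => symm_pointed g _ (hg i)⟩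

lemma NbhdIso.refl' {ι : Type*} (r : ℕ) (x : ι → M) : NbhdIso L r x x :=
  ⟨Language.Equiv.refl L _, fun i => by simp⟩

lemma NbhdIso.trans' {ι : Type*} {r : ℕ} {x y z : ι → M} :
    NbhdIso L r x y → NbhdIso L r y z → NbhdIso L r x z := by
  rintro ⟨g1, hg1⟩ ⟨g2, hg2⟩
  refine ⟨g2.comp g1, fun i => ?_⟩
  have h1 : g1 ⟨x i, mem_ball_self L r x i⟩ = ⟨y i, mem_ball_self L r y i⟩ :=
    Subtype.ext (hg1 i)
  show (g2 (g1 ⟨x i, mem_ball_self L r x i⟩) : M) = z i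
  rw [h1]
  exact hg2 i

/-- Transport of an isomorphism along equalities of the underlying sets. -/
def castIso {s t : Set M} (h : s = t) : s ≃[L] t := h ▸ Language.Equiv.refl L s

lemma castIso_val {s t : Set M} (h : s = t) (e : s) : ((castIso (L := L) h) e : M) = e.val := by
  subst h; simp [castIso]

/-- Gluing two isomorphisms of induced structures on mutually non-adjacent parts. -/
lemma glue_iso {s₁ s₂ t₁ t₂ : Set M}
    (g₁ : (s₁ : Set M) ≃[L] (t₁ : Set M)) (g₂ : (s₂ : Set M) ≃[L] (t₂ : Set M))
    (hs : ∀ u ∈ s₁, ∀ v ∈ s₂, ¬ gdist L u v ≤ 1)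
    (ht : ∀ u ∈ t₁, ∀ v ∈ t₂, ¬ gdist L u v ≤ 1) :
    ∃ h : ((s₁ ∪ s₂ : Set M)) ≃[L] ((t₁ ∪ t₂ : Set M)),
      (∀ (u : M) (hu : u ∈ s₁), (h ⟨u, Or.inl hu⟩ : M) = (g₁ ⟨u, hu⟩ : M)) ∧
      (∀ (u : M) (hu : u ∈ s₂), (h ⟨u, Or.inr hu⟩ : M) = (g₂ ⟨u, hu⟩ : M)) := by
  classical
  have hdS : ∀ u, u ∈ s₁ → u ∈ s₂ → False := fun u h1 h2 =>
    hs u h1 u h2 (by rw [gdist_self']; exact zero_le)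
  have hdT : ∀ u, u ∈ t₁ → u ∈ t₂ → False := fun u h1 h2 =>
    ht u h1 u h2 (by rw [gdist_self']; exact zero_le)
  set F : (s₁ ∪ s₂ : Set M) → (t₁ ∪ t₂ : Set M) := fun e =>
    if h : e.val ∈ s₁ then ⟨(g₁ ⟨e.val, h⟩ : M), Or.inl (g₁ ⟨e.val, h⟩).2⟩
    else ⟨(g₂ ⟨e.val, e.2.resolve_left h⟩ : M), Or.inr (g₂ ⟨e.val, e.2.resolve_left h⟩).2⟩
    with hFdef
  have hF₁ : ∀ (e : (s₁ ∪ s₂ : Set M)) (hu : e.val ∈ s₁), (F e).val = (g₁ ⟨e.val, hu⟩ : M) := by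
    intro e hu; simp only [hFdef, dif_pos hu]
  have hF₂ : ∀ (e : (s₁ ∪ s₂ : Set M)) (hu : e.val ∈ s₂), (F e).val = (g₂ ⟨e.val, hu⟩ : M) := by
    intro e hu
    have h1 : ¬ e.val ∈ s₁ := fun h => hdS e.val h hu
    simp only [hFdef, dif_neg h1]
  have hmem₁ : ∀ (e : (s₁ ∪ s₂ : Set M)), e.val ∈ s₁ → (F e).val ∈ t₁ := by
    intro e hu; rw [hF₁ e hu]; exact (g₁ ⟨e.val, hu⟩).2
  have hmem₂ : ∀ (e : (s₁ ∪ s₂ : Set M)), e.val ∈ s₂ → (F e).val ∈ t₂ := by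
    intro e hu; rw [hF₂ e hu]; exact (g₂ ⟨e.val, hu⟩).2
  have hinj : Function.Injective F := by
    intro a b hab
    have hab' := congrArg Subtype.val hab
    refine Subtype.ext ?_
    by_cases ha1 : a.val ∈ s₁ <;> by_cases hb1 : b.val ∈ s₁
    · rw [hF₁ a ha1, hF₁ b hb1] at hab'
      have h9 := g₁.injective (Subtype.ext hab' :
        g₁ ⟨a.val, ha1⟩ = g₁ ⟨b.val, hb1⟩)
      exact congrArg (fun z : s₁ => (z : M)) h9
    · have hb2 := b.2.resolve_left hb1
      exact ((hdT _ (hmem₁ a ha1) (hab' ▸ hmem₂ b hb2)).elim)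
    · have ha2 := a.2.resolve_left ha1
      exact ((hdT _ (hmem₁ b hb1) (hab'.symm ▸ hmem₂ a ha2)).elim)
    · have ha2 := a.2.resolve_left ha1
      have hb2 := b.2.resolve_left hb1
      rw [hF₂ a ha2, hF₂ b hb2] at hab'
      have h9 := g₂.injective (Subtype.ext hab' :
        g₂ ⟨a.val, ha2⟩ = g₂ ⟨b.val, hb2⟩)
      exact congrArg (fun z : s₂ => (z : M)) h9
  have hsurj : Function.Surjective F := by
    intro e'
    by_cases h1 : e'.val ∈ t₁
    · refine ⟨⟨(g₁.symm ⟨e'.val, h1⟩ : M), Or.inl (g₁.symm ⟨e'.val, h1⟩).2⟩, ?_⟩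
      apply Subtype.ext
      rw [hF₁ _ (g₁.symm ⟨e'.val, h1⟩).2]
      rw [Subtype.coe_eta]
      exact congrArg Subtype.val (g₁.apply_symm_apply _)
    · have h2 : e'.val ∈ t₂ := e'.2.resolve_left h1
      refine ⟨⟨(g₂.symm ⟨e'.val, h2⟩ : M), Or.inr (g₂.symm ⟨e'.val, h2⟩).2⟩, ?_⟩
      apply Subtype.ext
      rw [hF₂ _ (g₂.symm ⟨e'.val, h2⟩).2]
      rw [Subtype.coe_eta]
      exact congrArg Subtype.val (g₂.apply_symm_apply _)
  refine ⟨{ toEquiv := Equiv.ofBijective F ⟨hinj, hsurj⟩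
            map_fun' := fun f _ => isEmptyElim f
            map_rel' := ?_ },
    fun u hu => hF₁ ⟨u, Or.inl hu⟩ hu, fun u hu => hF₂ ⟨u, Or.inr hu⟩ hu⟩
  intro n R tup
  show Structure.RelMap R (fun m => (F (tup m)).val) ↔
    Structure.RelMap R (fun m => ((tup m).val))
  by_cases hall1 : ∀ m, (tup m).val ∈ s₁
  · rw [show (fun m => (F (tup m)).val) = (fun m => (g₁ ⟨(tup m).val, hall1 m⟩ : M)) from
      funext fun m => hF₁ _ _]
    exact g₁.map_rel R (fun m => ⟨(tup m).val, hall1 m⟩)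
  · by_cases hall2 : ∀ m, (tup m).val ∈ s₂
    · rw [show (fun m => (F (tup m)).val) = (fun m => (g₂ ⟨(tup m).val, hall2 m⟩ : M)) from
        funext fun m => hF₂ _ _]
      exact g₂.map_rel R (fun m => ⟨(tup m).val, hall2 m⟩)
    · push_neg at hall1 hall2
      obtain ⟨m₁, hm₁⟩ := hall1
      obtain ⟨m₂, hm₂⟩ := hall2
      have hm₁' : (tup m₁).val ∈ s₂ := (tup m₁).2.resolve_left hm₁
      have hm₂' : (tup m₂).val ∈ s₁ := (tup m₂).2.resolve_right hm₂
      constructor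
      · intro hR
        exact ((ht _ (hmem₁ _ hm₂') _ (hmem₂ _ hm₁')
          (gdist_le_one_of_rel hR m₂ m₁)).elim)
      · intro hR
        exact ((hs _ hm₂' _ hm₁' (gdist_le_one_of_rel hR m₂ m₁)).elim)

/-- Orbit argument: if `d` is far from `ȳ`, we can find `c` far from `x̄` with an
isomorphic (pointed) `r'`-neighborhood, inside a finite structure. -/
lemma find_far_copy [Finite M] {ι : Type*} {x y : ι → M} {r' : ℕ}
    (g : (ball L (3*r'+1) x) ≃[L] (ball L (3*r'+1) y))
    (hg : ∀ i, (g ⟨x i, mem_ball_self L (3*r'+1) x i⟩ : M) = y i)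
    {d : M} (hfar : ∀ i, ¬ gdist L (y i) d ≤ ((2*r'+1 : ℕ) : ℕ∞)) :
    ∃ c : M, (∀ i, ¬ gdist L (x i) c ≤ ((2*r'+1 : ℕ) : ℕ∞)) ∧
      NbhdIso L r' (fun _ : Unit => c) (fun _ : Unit => d) := by
  classical
  have hcast : ((2*r'+1 : ℕ) : ℕ∞) + (r' : ℕ∞) = ((3*r'+1 : ℕ) : ℕ∞) := by
    push_cast; ring
  have hler : ((2*r'+1 : ℕ) : ℕ∞) ≤ ((3*r'+1 : ℕ) : ℕ∞) :=
    Nat.cast_le.mpr (by omega)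
  set Close : M → Prop := fun e => ∃ i, gdist L (x i) e ≤ ((2*r'+1 : ℕ) : ℕ∞) with hCdef
  set step : M → M := fun e => if h : e ∈ ball L (3*r'+1) x then (g ⟨e, h⟩ : M) else e
    with hstepdef
  set seq : ℕ → M := fun k => step^[k] d with hseqdef
  -- basic step facts
  have hmem_of_close : ∀ e, Close e → e ∈ ball L (3*r'+1) x := by
    rintro e ⟨i, hi⟩; exact ⟨i, le_trans hi hler⟩
  have hstep_eq : ∀ e (he : e ∈ ball L (3*r'+1) x), step e = (g ⟨e, he⟩ : M) := by
    intro e he; simp only [hstepdef, dif_pos he]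
  have hclose_step : ∀ e, Close e → ∃ i, gdist L (y i) (step e) ≤ ((2*r'+1 : ℕ) : ℕ∞) := by
    rintro e ⟨i, hi⟩
    obtain ⟨he, hmap⟩ := gdist_map_le g hg (le_trans hi hler)
    refine ⟨i, ?_⟩
    rw [hstep_eq e (hmem_of_close e ⟨i, hi⟩)]
    exact le_trans hmap hi
  have hstep_iso : ∀ e, Close e →
      NbhdIso L r' (fun _ : Unit => e) (fun _ : Unit => step e) := by
    rintro e hce
    have he := hmem_of_close e hce
    obtain ⟨i, hi⟩ := hce
    obtain ⟨g', hg'⟩ := restrict_iso (r' := r') g hg (w := fun _ : Unit => e)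
      (w' := fun _ : Unit => step e) (fun _ => he)
      (fun _ => (hstep_eq e he).symm)
      (fun _ => ⟨i, by rw [← hcast]; exact add_le_add_left hi _⟩)
    exact ⟨g', fun _ => by rw [hg' e _ he]; exact (hstep_eq e he).symm⟩
  -- chain composition
  have hchain : ∀ k : ℕ, (∀ m < k, Close (seq m)) →
      NbhdIso L r' (fun _ : Unit => d) (fun _ : Unit => seq k) := by
    intro k
    induction k with
    | zero => intro _; exact NbhdIso.refl' r' _
    | succ k ih =>
      intro hall
      have h1 := ih (fun m hm => hall m (Nat.lt_succ_of_lt hm))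
      have h2 := hstep_iso (seq k) (hall k (Nat.lt_succ_self k))
      have hseqsucc : seq (k+1) = step (seq k) := by
        simp only [hseqdef, Function.iterate_succ_apply']
      rw [← hseqsucc] at h2
      exact NbhdIso.trans' h1 h2
  have hYclose : ∀ k : ℕ, 1 ≤ k → (∀ m < k, Close (seq m)) →
      ∃ i, gdist L (y i) (seq k) ≤ ((2*r'+1 : ℕ) : ℕ∞) := by
    intro k hk hall
    obtain ⟨m, rfl⟩ := Nat.exists_eq_add_of_le hk
    have hseqsucc : seq (1+m) = step (seq m) := by
      simp only [hseqdef, Nat.add_comm 1 m, Function.iterate_succ_apply']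
    rw [hseqsucc]
    exact hclose_step (seq m) (hall m (by omega))
  -- injectivity while no escape
  have hinj : ∀ b : ℕ, (∀ m < b, Close (seq m)) → ∀ a < b, seq a ≠ seq b := by
    intro b
    induction b with
    | zero => intro _ a ha; omega
    | succ b ih =>
      intro hall a ha heq
      rcases Nat.eq_zero_or_pos a with rfl | hpos
      · obtain ⟨i, hi⟩ := hYclose (b+1) (by omega) hall
        rw [← heq] at hi
        exact hfar i hi
      · obtain ⟨a', rfl⟩ := Nat.exists_eq_add_of_le hpos
        have hseq_a : seq (1+a') = step (seq a') := by
          simp only [hseqdef, Nat.add_comm 1 a', Function.iterate_succ_apply']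
        have hseq_b : seq (b+1) = step (seq b) := by
          simp only [hseqdef, Function.iterate_succ_apply']
        have hca := hall a' (by omega)
        have hcb := hall b (by omega)
        have hma := hmem_of_close _ hca
        have hmb := hmem_of_close _ hcb
        rw [hseq_a, hseq_b, hstep_eq _ hma, hstep_eq _ hmb] at heq
        have := g.injective (Subtype.ext heq : g ⟨seq a', hma⟩ = g ⟨seq b, hmb⟩)
        have heq' : seq a' = seq b := congrArg Subtype.val this
        exact ih (fun m hm => hall m (by omega)) a' (by omega) heq'
  -- find escape
  have hescape : ∃ k, ¬ Close (seq k) := by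
    by_contra hno
    push_neg at hno
    obtain ⟨a, b, hab, heq⟩ := Finite.exists_ne_map_eq_of_infinite seq
    rcases Nat.lt_or_ge a b with h | h
    · exact hinj b (fun m _ => hno m) a h heq
    · have h' : b < a := by omega
      exact hinj a (fun m _ => hno m) b h' heq.symm
  have hk₀ : ¬ Close (seq (Nat.find hescape)) := Nat.find_spec hescape
  have hmin : ∀ m < Nat.find hescape, Close (seq m) := fun m hm =>
    not_not.mp (Nat.find_min hescape hm)
  refine ⟨seq (Nat.find hescape), ?_, (hchain _ hmin).symm'⟩
  intro i hi
  exact hk₀ ⟨i, hi⟩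

end GaifmanBasics

/-! ### Syntactic auxiliaries: occurring variables, locality radius -/

section SyntaxAux

variable {L : Language} [L.IsRelational] {α : Type*}

lemma term_eq_var {β : Type*} (t : L.Term β) : ∃ b, t = Language.Term.var b := by
  cases t with
  | var b => exact ⟨b, rfl⟩
  | func f _ => exact isEmptyElim f

/-- The bound variables occurring in a term. -/
def tvar {n : ℕ} : L.Term (α ⊕ Fin n) → Finset (Fin n)
  | .var (Sum.inl _) => ∅
  | .var (Sum.inr i) => {i}
  | .func f _ => isEmptyElim f

lemma tvar_card_le {n : ℕ} (t : L.Term (α ⊕ Fin n)) : (tvar t).card ≤ 1 := by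
  rcases term_eq_var t with ⟨b, rfl⟩
  rcases b with a | i <;> simp [tvar]

/-- The free bound-variables actually occurring in a bounded formula. -/
def occ : ∀ {n : ℕ}, L.BoundedFormula α n → Finset (Fin n)
  | _, .falsum => ∅
  | _, .equal t₁ t₂ => tvar t₁ ∪ tvar t₂
  | _, .rel _ ts => Finset.univ.biUnion fun i => tvar (ts i)
  | _, .imp f g => occ f ∪ occ g
  | n, .all f => Finset.univ.filter (fun i : Fin n => Fin.castSucc i ∈ occ f)

/-- The locality radius of a formula. -/
def rad : ∀ {n : ℕ}, L.BoundedFormula α n → ℕ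
  | _, .falsum => 1
  | _, .equal _ _ => 1
  | _, .rel _ _ => 1
  | _, .imp f g => max (rad f) (rad g)
  | n, .all f => if Fin.last n ∈ occ f then 3 * rad f + 1 else rad f

lemma one_le_rad : ∀ {n : ℕ} (f : L.BoundedFormula α n), 1 ≤ rad f := by
  intro n f
  induction f with
  | falsum => simp [rad]
  | equal => simp [rad]
  | rel => simp [rad]
  | imp f g ihf ihg => simp only [rad]; omega
  | all f ih => simp only [rad]; split <;> omega

lemma occ_all_occurs {n : ℕ} (f : L.BoundedFormula α (n+1)) (h : Fin.last n ∈ occ f) :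
    (occ f).card = (occ (f.all)).card + 1 := by
  have hocc : occ f = (occ (f.all)).image Fin.castSucc ∪ {Fin.last n} := by
    ext i
    rcases eq_or_ne i (Fin.last n) with rfl | hne
    · simp [h]
    · obtain ⟨j, rfl⟩ := Fin.exists_castSucc_eq.mpr hne
      simp only [Finset.mem_union, Finset.mem_image, Finset.mem_singleton]
      constructor
      · intro hj
        exact Or.inl ⟨j, by simp [occ, hj], rfl⟩
      · rintro (⟨j', hj', he⟩ | he)
        · have : j' = j := Fin.castSucc_injective n he
          subst this
          simpa [occ] using hj'
        · exact absurd he hne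
  rw [hocc]
  rw [Finset.card_union_of_disjoint (by
    simp only [Finset.disjoint_singleton_right, Finset.mem_image]
    rintro ⟨j, _, he⟩
    exact (Fin.castSucc_lt_last j).ne he)]
  rw [Finset.card_image_of_injective _ (Fin.castSucc_injective n), Finset.card_singleton]

lemma occ_all_dummy {n : ℕ} (f : L.BoundedFormula α (n+1)) (h : Fin.last n ∉ occ f) :
    (occ f).card = (occ (f.all)).card := by
  have hocc : occ f = (occ (f.all)).image Fin.castSucc := by
    ext i
    rcases eq_or_ne i (Fin.last n) with rfl | hne
    · simp [h]
    · obtain ⟨j, rfl⟩ := Fin.exists_castSucc_eq.mpr hne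
      simp only [Finset.mem_image]
      constructor
      · intro hj
        exact ⟨j, by simp [occ, hj], rfl⟩
      · rintro ⟨j', hj', he⟩
        have : j' = j := Fin.castSucc_injective n he
        subst this
        simpa [occ] using hj'
  rw [hocc, Finset.card_image_of_injective _ (Fin.castSucc_injective n)]

/-- Accounting: the locality radius is bounded by `2 ^ fsize`. -/
lemma rad_mul_le : ∀ {n : ℕ} (f : L.BoundedFormula α n),
    rad f * 2 ^ (occ f).card ≤ 2 ^ fsize f := by
  intro n f
  induction f with
  | falsum => simp [rad, occ, fsize]
  | equal t₁ t₂ =>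
    have hc : (occ (BoundedFormula.equal t₁ t₂)).card ≤ 2 := by
      refine le_trans (Finset.card_union_le _ _) ?_
      have := tvar_card_le (α := α) t₁
      have := tvar_card_le (α := α) t₂
      omega
    calc rad (BoundedFormula.equal t₁ t₂) * 2 ^ (occ (BoundedFormula.equal t₁ t₂)).card
        = 2 ^ (occ (BoundedFormula.equal t₁ t₂)).card := by simp [rad]
      _ ≤ 2 ^ 3 := Nat.pow_le_pow_right (by norm_num) (le_trans hc (by norm_num))
      _ = 2 ^ fsize (BoundedFormula.equal t₁ t₂) := by simp [fsize]
  | @rel n l R ts =>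
    have hc : (occ (BoundedFormula.rel R ts)).card ≤ l := by
      refine le_trans (Finset.card_biUnion_le) ?_
      calc ∑ i : Fin l, (tvar (ts i)).card ≤ ∑ _i : Fin l, 1 :=
            Finset.sum_le_sum (fun i _ => tvar_card_le (ts i))
        _ = l := by simp
    calc rad (BoundedFormula.rel R ts) * 2 ^ (occ (BoundedFormula.rel R ts)).card
        = 2 ^ (occ (BoundedFormula.rel R ts)).card := by simp [rad]
      _ ≤ 2 ^ (l + 1) := Nat.pow_le_pow_right (by norm_num) (by omega)
      _ = 2 ^ fsize (BoundedFormula.rel R ts) := by simp [fsize]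
  | imp f g ihf ihg =>
    have h1f := one_le_rad f
    have h1g := one_le_rad g
    have hc : (occ (f.imp g)).card ≤ (occ f).card + (occ g).card :=
      Finset.card_union_le _ _
    have hmax : rad (f.imp g) ≤ rad f * rad g := by
      simp only [rad]
      rcases Nat.le_total (rad f) (rad g) with h | h
      · rw [max_eq_right h]; exact Nat.le_mul_of_pos_left _ h1f
      · rw [max_eq_left h]; exact Nat.le_mul_of_pos_right _ h1g
    calc rad (f.imp g) * 2 ^ (occ (f.imp g)).card
        ≤ (rad f * rad g) * 2 ^ ((occ f).card + (occ g).card) :=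
          Nat.mul_le_mul hmax (Nat.pow_le_pow_right (by norm_num) hc)
      _ = (rad f * 2 ^ (occ f).card) * (rad g * 2 ^ (occ g).card) := by
          rw [pow_add]; ring
      _ ≤ 2 ^ fsize f * 2 ^ fsize g := Nat.mul_le_mul ihf ihg
      _ = 2 ^ (fsize f + fsize g) := by rw [pow_add]
      _ ≤ 2 ^ fsize (f.imp g) := Nat.pow_le_pow_right (by norm_num) (by simp [fsize])
  | all f ih =>
    by_cases h : Fin.last _ ∈ occ f
    · have hcard := occ_all_occurs f h
      have hrad : rad (f.all) = 3 * rad f + 1 := by simp [rad, h]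
      have h1 := one_le_rad f
      have hfs : fsize (f.all) = fsize f + 1 := by simp [fsize]
      rw [hrad, hfs]
      have key : (3 * rad f + 1) * 2 ^ (occ f.all).card
          ≤ 4 * rad f * 2 ^ (occ f.all).card := by
        apply Nat.mul_le_mul_right
        omega
      refine le_trans key ?_
      have : 4 * rad f * 2 ^ (occ f.all).card = 2 * (rad f * 2 ^ (occ f).card) := by
        rw [hcard, pow_succ]; ring
      rw [this, pow_succ]
      calc 2 * (rad f * 2 ^ (occ f).card) ≤ 2 * 2 ^ fsize f := by
            exact Nat.mul_le_mul_left _ ih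
        _ = 2 ^ fsize f * 2 := by ring
    · have hcard := occ_all_dummy f h
      have hrad : rad (f.all) = rad f := by simp [rad, h]
      have hfs : fsize (f.all) = fsize f + 1 := by simp [fsize]
      rw [hrad, hfs, ← hcard, pow_succ]
      exact le_trans ih (Nat.le_mul_of_pos_right _ (by norm_num))

lemma rad_le_two_pow_fsize {n : ℕ} (f : L.BoundedFormula α n) : rad f ≤ 2 ^ fsize f := by
  have := rad_mul_le f
  have h2 : 1 ≤ 2 ^ (occ f).card := Nat.one_le_two_pow
  calc rad f = rad f * 1 := by ring
    _ ≤ rad f * 2 ^ (occ f).card := Nat.mul_le_mul_left _ h2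
    _ ≤ 2 ^ fsize f := this

end SyntaxAux

/-! ### Realization only depends on occurring variables -/

section Independence

variable {L : Language} [L.IsRelational] {α : Type*} {M : Type*} [L.Structure M]

lemma term_realize_congr {n : ℕ} (t : L.Term (α ⊕ Fin n)) (v : α → M)
    {xs xs' : Fin n → M} (h : ∀ i ∈ tvar t, xs i = xs' i) :
    t.realize (Sum.elim v xs) = t.realize (Sum.elim v xs') := by
  obtain ⟨b, rfl⟩ := term_eq_var t
  rcases b with a | i
  · rfl
  · exact h i (by simp [tvar])

lemma realize_congr_occ : ∀ {n : ℕ} (f : L.BoundedFormula α n) (v : α → M)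
    (xs xs' : Fin n → M), (∀ i ∈ occ f, xs i = xs' i) →
    (f.Realize v xs ↔ f.Realize v xs') := by
  intro n f
  induction f with
  | falsum => intro v xs xs' h; exact Iff.rfl
  | equal t₁ t₂ =>
    intro v xs xs' h
    have e₁ := term_realize_congr t₁ v (fun i hi => h i (by simp [occ, hi]))
    have e₂ := term_realize_congr t₂ v (fun i hi => h i (by simp [occ, hi]))
    show (t₁.realize (Sum.elim v xs) = t₂.realize (Sum.elim v xs)) ↔
      (t₁.realize (Sum.elim v xs') = t₂.realize (Sum.elim v xs'))
    rw [e₁, e₂]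
  | @rel n l R ts =>
    intro v xs xs' h
    have e : ∀ i, (ts i).realize (Sum.elim v xs) = (ts i).realize (Sum.elim v xs') := by
      intro i
      refine term_realize_congr (ts i) v (fun j hj => h j ?_)
      simp only [occ, Finset.mem_biUnion]
      exact ⟨i, Finset.mem_univ i, hj⟩
    show Structure.RelMap R (fun i => (ts i).realize (Sum.elim v xs)) ↔
      Structure.RelMap R (fun i => (ts i).realize (Sum.elim v xs'))
    rw [funext e]
  | imp f g ihf ihg =>
    intro v xs xs' h
    have h₁ := ihf v xs xs' (fun i hi => h i (by simp only [occ, Finset.mem_union]; exact Or.inl hi))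
    have h₂ := ihg v xs xs' (fun i hi => h i (by simp only [occ, Finset.mem_union]; exact Or.inr hi))
    show (f.Realize v xs → g.Realize v xs) ↔ (f.Realize v xs' → g.Realize v xs')
    rw [h₁, h₂]
  | @all n f ih =>
    intro v xs xs' h
    show (∀ d : M, f.Realize v (Fin.snoc xs d)) ↔ (∀ d : M, f.Realize v (Fin.snoc xs' d))
    refine forall_congr' (fun d => ih v _ _ ?_)
    intro i hi
    rcases eq_or_ne i (Fin.last n) with rfl | hne
    · simp [Fin.snoc_last]
    · obtain ⟨j, rfl⟩ := Fin.exists_castSucc_eq.mpr hne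
      have hj : j ∈ occ (f.all) := by simp [occ, hi]
      simp only [Fin.snoc_castSucc]
      exact h j hj

end Independence

/-! ### The locality theorem -/

section Locality

variable {L : Language} [L.IsRelational] {M : Type*} [L.Structure M]

lemma ball_elim_snoc {α : Type*} {n : ℕ} (r : ℕ) (v : α → M) (xs : Fin n → M) (c : M) :
    ball L r (Sum.elim v (Fin.snoc xs c)) =
      ball L r (Sum.elim v xs) ∪ ball L r (fun _ : Unit => c) := by
  ext e
  constructor
  · rintro ⟨i, hi⟩
    rcases i with a | i
    · exact Or.inl ⟨Sum.inl a, hi⟩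
    · rcases eq_or_ne i (Fin.last n) with rfl | hne
      · right; exact ⟨(), by simpa [Fin.snoc_last] using hi⟩
      · obtain ⟨j, rfl⟩ := Fin.exists_castSucc_eq.mpr hne
        left; exact ⟨Sum.inr j, by simpa [Fin.snoc_castSucc] using hi⟩
  · rintro (⟨i, hi⟩ | ⟨_, hi⟩)
    · rcases i with a | j
      · exact ⟨Sum.inl a, hi⟩
      · exact ⟨Sum.inr j.castSucc, by simpa [Fin.snoc_castSucc] using hi⟩
    · exact ⟨Sum.inr (Fin.last n), by simpa [Fin.snoc_last] using hi⟩

lemma locality [Finite M] {α : Type*} :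
    ∀ {n : ℕ} (f : L.BoundedFormula α n) (v v' : α → M) (xs xs' : Fin n → M),
      NbhdIso L (rad f) (Sum.elim v xs) (Sum.elim v' xs') →
      f.Realize v xs → f.Realize v' xs' := by
  intro n f
  induction f with
  | falsum =>
    intro v v' xs xs' _ h
    exact (h : False).elim
  | equal t₁ t₂ =>
    intro v v' xs xs' hiso hreal
    obtain ⟨g, hg⟩ := hiso
    obtain ⟨b₁, rfl⟩ := term_eq_var t₁
    obtain ⟨b₂, rfl⟩ := term_eq_var t₂
    have h1 : Sum.elim v xs b₁ = Sum.elim v xs b₂ := hreal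
    show Sum.elim v' xs' b₁ = Sum.elim v' xs' b₂
    rw [← hg b₁, ← hg b₂]
    exact congrArg (fun z => (g z : M)) (Subtype.ext h1)
  | @rel n l R ts =>
    intro v v' xs xs' hiso hreal
    obtain ⟨g, hg⟩ := hiso
    choose b hb using fun i => term_eq_var (ts i)
    have hts : ts = fun i => Language.Term.var (b i) := funext hb
    subst hts
    have hreal' : Structure.RelMap R (fun i => Sum.elim v xs (b i)) := hreal
    show Structure.RelMap R (fun i => Sum.elim v' xs' (b i))
    have h4 := funext (fun i => (hg (b i)).symm)
    rw [h4]
    exact (g.map_rel R _).mpr hreal'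
  | imp f₁ f₂ ihf ihg =>
    intro v v' xs xs' hiso h hf'
    have hle₁ : rad f₁ ≤ rad (f₁.imp f₂) := le_max_left _ _
    have hle₂ : rad f₂ ≤ rad (f₁.imp f₂) := le_max_right _ _
    exact ihg v v' xs xs' (hiso.mono hle₂) (h (ihf v' v xs' xs ((hiso.mono hle₁).symm') hf'))
  | @all n f ih =>
    intro v v' xs xs' hiso hall
    show ∀ d : M, f.Realize v' (Fin.snoc xs' d)
    have hall' : ∀ c : M, f.Realize v (Fin.snoc xs c) := hall
    have hcases : ∀ (c d : M) (j : α ⊕ Fin (n+1)),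
        (∃ i₁ : α ⊕ Fin n, Sum.elim v (Fin.snoc xs c) j = Sum.elim v xs i₁ ∧
          Sum.elim v' (Fin.snoc xs' d) j = Sum.elim v' xs' i₁) ∨
        (Sum.elim v (Fin.snoc xs c) j = c ∧ Sum.elim v' (Fin.snoc xs' d) j = d) := by
      rintro c d (a | i)
      · exact Or.inl ⟨Sum.inl a, rfl, rfl⟩
      · rcases eq_or_ne i (Fin.last n) with rfl | hne₂
        · exact Or.inr ⟨by simp, by simp⟩
        · obtain ⟨j, rfl⟩ := Fin.exists_castSucc_eq.mpr hne₂
          exact Or.inl ⟨Sum.inr j, by simp, by simp⟩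
    by_cases hocc : Fin.last n ∈ occ f
    · -- the quantified variable occurs: radius shrinks from 3r'+1 to r'
      have hrad : rad f.all = 3 * rad f + 1 := by simp [rad, hocc]
      rw [hrad] at hiso
      obtain ⟨g, hg⟩ := hiso
      have hgsymm : ∀ i, (g.symm ⟨Sum.elim v' xs' i,
          mem_ball_self L (3 * rad f + 1) (Sum.elim v' xs') i⟩ : M) = Sum.elim v xs i :=
        fun i => symm_pointed g _ (hg i)
      have hler : ((2*(rad f)+1 : ℕ) : ℕ∞) ≤ ((3*(rad f)+1 : ℕ) : ℕ∞) :=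
        Nat.cast_le.mpr (by omega)
      have hcast : ((2*(rad f)+1 : ℕ) : ℕ∞) + ((rad f : ℕ) : ℕ∞) = ((3*(rad f)+1 : ℕ) : ℕ∞) := by
        push_cast; ring
      intro d
      by_cases hclose : ∃ i, gdist L (Sum.elim v' xs' i) d ≤ ((2*(rad f)+1 : ℕ) : ℕ∞)
      · -- CASE A : d is close to the target tuple
        obtain ⟨i₀, hi₀⟩ := hclose
        have hdmem : d ∈ ball L (3*(rad f)+1) (Sum.elim v' xs') := ⟨i₀, le_trans hi₀ hler⟩
        obtain ⟨hdm, hbound⟩ := gdist_map_le g.symm hgsymm (i := i₀) (e := d)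
          (le_trans hi₀ hler)
        set c : M := (g.symm ⟨d, hdm⟩ : M) with hcdef
        have hcmem : c ∈ ball L (3*(rad f)+1) (Sum.elim v xs) := (g.symm ⟨d, hdm⟩).2
        have hgc : (g ⟨c, hcmem⟩ : M) = d := by
          have he : (⟨c, hcmem⟩ : ball L (3*(rad f)+1) (Sum.elim v xs)) = g.symm ⟨d, hdm⟩ :=
            Subtype.ext hcdef
          rw [he]
          exact congrArg Subtype.val (g.apply_symm_apply ⟨d, hdm⟩)
        have hcd : gdist L (Sum.elim v xs i₀) c ≤ ((2*(rad f)+1 : ℕ) : ℕ∞) :=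
          le_trans hbound hi₀
        have hw1 : ∀ j, Sum.elim v (Fin.snoc xs c) j ∈ ball L (3*(rad f)+1) (Sum.elim v xs) := by
          intro j
          rcases hcases c d j with ⟨i₁, h1, _⟩ | ⟨h1, _⟩
          · rw [h1]; exact mem_ball_self _ _ _ i₁
          · rw [h1]; exact hcmem
        have hw2 : ∀ j, (g ⟨Sum.elim v (Fin.snoc xs c) j, hw1 j⟩ : M)
            = Sum.elim v' (Fin.snoc xs' d) j := by
          intro j
          rcases hcases c d j with ⟨i₁, h1, h2⟩ | ⟨h1, h2⟩
          · rw [h2]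
            have he : (⟨Sum.elim v (Fin.snoc xs c) j, hw1 j⟩ :
                ball L (3*(rad f)+1) (Sum.elim v xs)) = ⟨Sum.elim v xs i₁,
                  mem_ball_self L (3*(rad f)+1) (Sum.elim v xs) i₁⟩ := Subtype.ext h1
            rw [he]
            exact hg i₁
          · rw [h2]
            have he : (⟨Sum.elim v (Fin.snoc xs c) j, hw1 j⟩ :
                ball L (3*(rad f)+1) (Sum.elim v xs)) = ⟨c, hcmem⟩ := Subtype.ext h1
            rw [he]
            exact hgc
        have hw3 : ∀ j, ∃ i₁, gdist L (Sum.elim v xs i₁) (Sum.elim v (Fin.snoc xs c) j)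
            + ((rad f : ℕ) : ℕ∞) ≤ ((3*(rad f)+1 : ℕ) : ℕ∞) := by
          intro j
          rcases hcases c d j with ⟨i₁, h1, _⟩ | ⟨h1, _⟩
          · refine ⟨i₁, ?_⟩
            rw [h1, gdist_self', zero_add]
            exact Nat.cast_le.mpr (by omega)
          · refine ⟨i₀, ?_⟩
            rw [h1, ← hcast]
            exact add_le_add_left hcd _
        obtain ⟨g', hg'₂⟩ := restrict_iso (r' := rad f) g hg hw1 hw2 hw3
        refine ih v v' (Fin.snoc xs c) (Fin.snoc xs' d) ⟨g', fun j => ?_⟩ (hall' c)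
        rw [hg'₂ _ _ (hw1 j)]
        exact hw2 j
      · -- CASE B/C : d is far from the target tuple; find a far partner via the orbit trick
        push_neg at hclose
        have hfar : ∀ i, ¬ gdist L (Sum.elim v' xs' i) d ≤ ((2*(rad f)+1 : ℕ) : ℕ∞) :=
          fun i h => absurd h (not_le.mpr (hclose i))
        obtain ⟨c, hcfar, ψiso⟩ := find_far_copy g hg hfar
        obtain ⟨ψ, hψ⟩ := ψiso
        obtain ⟨g₀, hg₀⟩ := restrict_iso (r' := rad f) g hg
          (w := Sum.elim v xs) (w' := Sum.elim v' xs')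
          (fun i => mem_ball_self _ _ _ i) hg
          (fun i => ⟨i, by rw [gdist_self', zero_add]; exact Nat.cast_le.mpr (by omega)⟩)
        have haux : ((rad f : ℕ) : ℕ∞) + 1 + ((rad f : ℕ) : ℕ∞)
            = ((2*(rad f)+1 : ℕ) : ℕ∞) := by push_cast; ring
        have hsepS : ∀ u ∈ ball L (rad f) (Sum.elim v xs),
            ∀ w ∈ ball L (rad f) (fun _ : Unit => c), ¬ gdist L u w ≤ 1 := by
          rintro u ⟨i, hi⟩ w ⟨_, hw⟩ hle
          refine hcfar i ?_
          calc gdist L (Sum.elim v xs i) c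
              ≤ gdist L (Sum.elim v xs i) u + gdist L u c := gdist_triangle' _ _ _
            _ ≤ gdist L (Sum.elim v xs i) u + (gdist L u w + gdist L w c) :=
                add_le_add_right (gdist_triangle' _ _ _) _
            _ ≤ ((rad f : ℕ) : ℕ∞) + (1 + ((rad f : ℕ) : ℕ∞)) := by
                refine add_le_add hi (add_le_add hle ?_)
                rw [gdist_comm']
                exact hw
            _ = ((2*(rad f)+1 : ℕ) : ℕ∞) := by rw [← haux]; ring
        have hsepT : ∀ u ∈ ball L (rad f) (Sum.elim v' xs'),
            ∀ w ∈ ball L (rad f) (fun _ : Unit => d), ¬ gdist L u w ≤ 1 := by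
          rintro u ⟨i, hi⟩ w ⟨_, hw⟩ hle
          refine hfar i ?_
          calc gdist L (Sum.elim v' xs' i) d
              ≤ gdist L (Sum.elim v' xs' i) u + gdist L u d := gdist_triangle' _ _ _
            _ ≤ gdist L (Sum.elim v' xs' i) u + (gdist L u w + gdist L w d) :=
                add_le_add_right (gdist_triangle' _ _ _) _
            _ ≤ ((rad f : ℕ) : ℕ∞) + (1 + ((rad f : ℕ) : ℕ∞)) := by
                refine add_le_add hi (add_le_add hle ?_)
                rw [gdist_comm']
                exact hw
            _ = ((2*(rad f)+1 : ℕ) : ℕ∞) := by rw [← haux]; ring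
        obtain ⟨hglue, hgl₁, hgl₂⟩ := glue_iso g₀ ψ hsepS hsepT
        have hb₁ := ball_elim_snoc (L := L) (rad f) v xs c
        have hb₂ := ball_elim_snoc (L := L) (rad f) v' xs' d
        refine ih v v' (Fin.snoc xs c) (Fin.snoc xs' d)
          ⟨(castIso hb₂.symm).comp (hglue.comp (castIso hb₁)), fun j => ?_⟩ (hall' c)
        -- value chase through the composition
        have hv1 : ∀ (e : (ball L (rad f) (Sum.elim v (Fin.snoc xs c)))),
            (((castIso hb₂.symm).comp (hglue.comp (castIso (L := L) hb₁))) e : M)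
              = (hglue ⟨e.val, hb₁ ▸ e.2⟩ : M) := by
          intro e
          have e1 : castIso (L := L) hb₁ e = ⟨e.val, hb₁ ▸ e.2⟩ := Subtype.ext (castIso_val hb₁ e)
          show (castIso (L := L) hb₂.symm (hglue (castIso (L := L) hb₁ e)) : M) = _
          rw [castIso_val, e1]
        rw [hv1]
        rcases hcases c d j with ⟨i₁, h1, h2⟩ | ⟨h1, h2⟩
        · have hm₁ : Sum.elim v (Fin.snoc xs c) j ∈ ball L (rad f) (Sum.elim v xs) := by
            rw [h1]; exact mem_ball_self _ _ _ i₁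
          have he : (⟨Sum.elim v (Fin.snoc xs c) j, hb₁ ▸ (mem_ball_self _ _ _ j)⟩ :
              ((ball L (rad f) (Sum.elim v xs) ∪ ball L (rad f) (fun _ : Unit => c) : Set M)))
              = ⟨Sum.elim v (Fin.snoc xs c) j, Or.inl hm₁⟩ := Subtype.ext rfl
          rw [he, hgl₁ _ hm₁, h2]
          have he₂ : (⟨Sum.elim v (Fin.snoc xs c) j, hm₁⟩ :
              (ball L (rad f) (Sum.elim v xs))) = ⟨Sum.elim v xs i₁,
                mem_ball_self L (rad f) (Sum.elim v xs) i₁⟩ := Subtype.ext h1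
          rw [he₂, hg₀ _ _ (mem_ball_self _ _ _ i₁)]
          exact hg i₁
        · have hm₂ : Sum.elim v (Fin.snoc xs c) j ∈ ball L (rad f) (fun _ : Unit => c) := by
            rw [h1]; exact mem_ball_self _ _ _ ()
          have he : (⟨Sum.elim v (Fin.snoc xs c) j, hb₁ ▸ (mem_ball_self _ _ _ j)⟩ :
              ((ball L (rad f) (Sum.elim v xs) ∪ ball L (rad f) (fun _ : Unit => c) : Set M)))
              = ⟨Sum.elim v (Fin.snoc xs c) j, Or.inr hm₂⟩ := Subtype.ext rfl
          rw [he, hgl₂ _ hm₂, h2]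
          have he₂ : (⟨Sum.elim v (Fin.snoc xs c) j, hm₂⟩ :
              (ball L (rad f) (fun _ : Unit => c))) = ⟨c,
                mem_ball_self L (rad f) (fun _ : Unit => c) ()⟩ := Subtype.ext h1
          rw [he₂]
          exact hψ ()
    · -- the quantified variable does not occur
      have hrad : rad f.all = rad f := by simp [rad, hocc]
      rw [hrad] at hiso
      rcases isEmpty_or_nonempty (α ⊕ Fin n) with hie | hne
      · have hv : v = v' := funext fun a => (hie.false (Sum.inl a)).elim
        have hxs : xs = xs' := funext fun i => (hie.false (Sum.inr i)).elim
        subst hv; subst hxs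
        exact hall'
      · obtain ⟨j₀⟩ := hne
        intro d
        obtain ⟨g, hg⟩ := hiso
        have hw1 : ∀ j, Sum.elim v (Fin.snoc xs (Sum.elim v xs j₀)) j
            ∈ ball L (rad f) (Sum.elim v xs) := by
          intro j
          rcases hcases (Sum.elim v xs j₀) (Sum.elim v' xs' j₀) j with ⟨i₁, h1, _⟩ | ⟨h1, _⟩
          · rw [h1]; exact mem_ball_self _ _ _ i₁
          · rw [h1]; exact mem_ball_self _ _ _ j₀
        have hw2 : ∀ j, (g ⟨Sum.elim v (Fin.snoc xs (Sum.elim v xs j₀)) j, hw1 j⟩ : M)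
            = Sum.elim v' (Fin.snoc xs' (Sum.elim v' xs' j₀)) j := by
          intro j
          rcases hcases (Sum.elim v xs j₀) (Sum.elim v' xs' j₀) j with ⟨i₁, h1, h2⟩ | ⟨h1, h2⟩
          · rw [h2]
            have he : (⟨Sum.elim v (Fin.snoc xs (Sum.elim v xs j₀)) j, hw1 j⟩ :
                (ball L (rad f) (Sum.elim v xs))) = ⟨Sum.elim v xs i₁,
                  mem_ball_self L (rad f) (Sum.elim v xs) i₁⟩ := Subtype.ext h1
            rw [he]
            exact hg i₁
          · rw [h2]
            have he : (⟨Sum.elim v (Fin.snoc xs (Sum.elim v xs j₀)) j, hw1 j⟩ :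
                (ball L (rad f) (Sum.elim v xs))) = ⟨Sum.elim v xs j₀,
                  mem_ball_self L (rad f) (Sum.elim v xs) j₀⟩ := Subtype.ext h1
            rw [he]
            exact hg j₀
        have hw3 : ∀ j, ∃ i₁, gdist L (Sum.elim v xs i₁)
            (Sum.elim v (Fin.snoc xs (Sum.elim v xs j₀)) j)
            + ((rad f : ℕ) : ℕ∞) ≤ ((rad f : ℕ) : ℕ∞) := by
          intro j
          rcases hcases (Sum.elim v xs j₀) (Sum.elim v' xs' j₀) j with ⟨i₁, h1, _⟩ | ⟨h1, _⟩
          · exact ⟨i₁, by rw [h1, gdist_self', zero_add]⟩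
          · exact ⟨j₀, by rw [h1, gdist_self', zero_add]⟩
        obtain ⟨g', hg'₂⟩ := restrict_iso (r' := rad f) g hg hw1 hw2 hw3
        have hreal := ih v v' (Fin.snoc xs (Sum.elim v xs j₀))
          (Fin.snoc xs' (Sum.elim v' xs' j₀))
          ⟨g', fun j => by rw [hg'₂ _ _ (hw1 j)]; exact hw2 j⟩ (hall' _)
        refine (realize_congr_occ f v' _ _ ?_).mp hreal
        intro i hi
        rcases eq_or_ne i (Fin.last n) with rfl | hne₂
        · exact absurd hi hocc
        · obtain ⟨j, rfl⟩ := Fin.exists_castSucc_eq.mpr hne₂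
          simp [Fin.snoc_castSucc]

end Locality

/-! ### Bridging to `Formula.Realize` -/

section Bridge

variable {L : Language} [L.IsRelational] {M : Type*} [L.Structure M]

lemma ball_sum_default {k : ℕ} (r : ℕ) (a : Fin k → M) :
    ball L r (Sum.elim a (default : Fin 0 → M)) = ball L r a := by
  ext e
  constructor
  · rintro ⟨i, hi⟩
    rcases i with i | i
    · exact ⟨i, hi⟩
    · exact i.elim0
  · rintro ⟨i, hi⟩
    exact ⟨Sum.inl i, hi⟩

lemma nbhdIso_sum_default {k : ℕ} {r : ℕ} {a b : Fin k → M} (h : NbhdIso L r a b) :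
    NbhdIso L r (Sum.elim a (default : Fin 0 → M)) (Sum.elim b (default : Fin 0 → M)) := by
  obtain ⟨g, hg⟩ := h
  refine ⟨(castIso (ball_sum_default r b).symm).comp
    (g.comp (castIso (ball_sum_default r a))), ?_⟩
  rintro (i | i)
  · show (castIso (L := L) (ball_sum_default r b).symm
      (g (castIso (L := L) (ball_sum_default r a)
        ⟨Sum.elim a (default : Fin 0 → M) (Sum.inl i), _⟩)) : M) = b i
    rw [castIso_val]
    have e1 : castIso (L := L) (ball_sum_default r a)
        ⟨Sum.elim a (default : Fin 0 → M) (Sum.inl i),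
          mem_ball_self L r (Sum.elim a (default : Fin 0 → M)) (Sum.inl i)⟩
        = ⟨a i, mem_ball_self L r a i⟩ := Subtype.ext (castIso_val _ _)
    rw [e1]
    exact hg i
  · exact i.elim0

lemma locality_formula [Finite M] {k : ℕ} (φ : L.Formula (Fin k)) {r : ℕ}
    (hr : r = 2 ^ fsize φ) {a b : Fin k → M} (h : NbhdIso L r a b) :
    φ.Realize a → φ.Realize b := by
  have hrad : rad φ ≤ r := hr ▸ rad_le_two_pow_fsize φ
  have h2 := nbhdIso_sum_default (h.mono hrad)
  exact locality φ a b default default h2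

end Bridge

/-- **Decomposition of the answer set of a query into finitely many neighborhood types.**
Let `φ(x₁,…,x_k)` be a first-order formula over the finite relational signature `L`,
`r = 2 ^ |φ|`, and `M` a finite `L`-structure. Then there is a finite list `S` of finite
`L`-structures expanded with `k` constants such that for every `k`-tuple `a` of elements
of `M`: `M ⊨ φ(a)` iff `𝒩_r(a)` is isomorphic to some member of `S`. In particular, the
answer set `φ(M)` is a union of classes of the equivalence relation
`a ∼ b ↔ 𝒩_r(a) ≃ 𝒩_r(b)`. -/
theorem answer_set_decomposition {L : Language} [L.IsRelational]
    [Finite (Σ n, L.Relations n)] {M : Type*} [L.Structure M] [Finite M]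
    {k : ℕ} (φ : L.Formula (Fin k)) (r : ℕ) (hr : r = 2 ^ fsize φ) :
    ∃ (N : ℕ) (S : Fin N → PointedStr L k),
      (∀ a : Fin k → M, φ.Realize a ↔
        ∃ (i : Fin N) (g : (ball L r a) ≃[L] (S i).carrier),
          ∀ j : Fin k, g ⟨a j, mem_ball_self L r a j⟩ = (S i).pts j) ∧
      (∀ a b : Fin k → M, NbhdIso L r a b → (φ.Realize a → φ.Realize b)) := by
  classical
  obtain ⟨N, ⟨eT⟩⟩ := Finite.exists_equiv_fin {a : Fin k → M // φ.Realize a}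
  have hball : ∀ t : {a : Fin k → M // φ.Realize a},
      ∃ p : Σ m : ℕ, (ball L r t.val) ≃ Fin m, True := by
    intro t
    obtain ⟨m, ⟨em⟩⟩ := Finite.exists_equiv_fin (ball L r t.val)
    exact ⟨⟨m, em⟩, trivial⟩
  choose p _ using hball
  refine ⟨N, fun i =>
    { carrier := Fin (p (eT.symm i)).1
      str := Equiv.inducedStructure (p (eT.symm i)).2
      finite := inferInstance
      pts := fun j => (p (eT.symm i)).2 ⟨(eT.symm i).val j,
        mem_ball_self L r (eT.symm i).val j⟩ }, ?_, ?_⟩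
  · intro a
    constructor
    · intro ha
      refine ⟨eT ⟨a, ha⟩, ?_⟩
      have hkey : eT.symm (eT ⟨a, ha⟩) = ⟨a, ha⟩ := eT.symm_apply_apply _
      beta_reduce
      rw [hkey]
      exact ⟨Equiv.inducedStructureEquiv (L := L) (p ⟨a, ha⟩).2, fun j => rfl⟩
    · rintro ⟨i, g, hgp⟩
      have hiso : NbhdIso L r a (eT.symm i).val := by
        letI : L.Structure (Fin (p (eT.symm i)).1) := Equiv.inducedStructure (p (eT.symm i)).2
        refine ⟨(Equiv.inducedStructureEquiv (L := L) (p (eT.symm i)).2).symm.comp g, fun j => ?_⟩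
        show ((Equiv.inducedStructureEquiv (L := L) (p (eT.symm i)).2).symm
          (g ⟨a j, mem_ball_self L r a j⟩) : M) = (eT.symm i).val j
        rw [hgp j]
        have hpt : ((p (eT.symm i)).2 ⟨(eT.symm i).val j,
            mem_ball_self L r (eT.symm i).val j⟩ : Fin (p (eT.symm i)).1)
            = Equiv.inducedStructureEquiv (L := L) (p (eT.symm i)).2 ⟨(eT.symm i).val j,
              mem_ball_self L r (eT.symm i).val j⟩ := rfl
        show ((Equiv.inducedStructureEquiv (L := L) (p (eT.symm i)).2).symm
          ((p (eT.symm i)).2 ⟨(eT.symm i).val j, mem_ball_self L r (eT.symm i).val j⟩) : M)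
            = (eT.symm i).val j
        rw [hpt, (Equiv.inducedStructureEquiv (L := L) (p (eT.symm i)).2).symm_apply_apply]
      exact locality_formula φ hr hiso.symm' (eT.symm i).2
  · intro a b hab ha
    exact locality_formula φ hr hab ha
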